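/- arXiv:1805.09426 — 2 statements merged into one kernel-verified Lean document; each statement's English description precedes it below -/
import Mathlib

section
/- Fix α ∈ (0,1), an integer m ≥ 2 and an integer l ≠ 0. Define the kernel Q_l(s,τ) on (0,∞)² by Q_l(s,τ) = (i/2) sign(l) s^{|ml|-1} τ^{-|ml|} G'(s) for τ ≥ s and Q_l(s,τ) = (i/2) sign(l) s^{-|ml|-1} τ^{|ml|} G'(s) for τ ≤ s, where G' satisfies |G'(s)| ≤ C(1+s)^{-1-α}·s^{-1}·s = C(1+s)^{-1-α}. Then the Hilbert–Schmidt norm squared ∫₀^∞∫₀^∞ |Q_l(s,τ)|² s ds τ dτ is finite and bounded by C/|ml| for a constant C depending only on α and the bound on G'. -/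
open MeasureTheory Set

lemma lintA {s p : ℝ} (hs : 0 < s) (hp : p < -1) :
    ∫⁻ τ in Ioi s, ENNReal.ofReal (τ ^ p) = ENNReal.ofReal (-s ^ (p + 1) / (p + 1)) := by
  rw [← integral_Ioi_rpow_of_lt hp hs]
  refine (ofReal_integral_eq_lintegral_ofReal (integrableOn_Ioi_rpow_of_lt hp hs) ?_).symm
  filter_upwards [ae_restrict_mem measurableSet_Ioi] with x hx
  exact Real.rpow_nonneg (hs.trans hx).le _

lemma lintB {s p : ℝ} (hs : 0 < s) (hp : 0 ≤ p) :
    ∫⁻ τ in Ioc 0 s, ENNReal.ofReal (τ ^ p) = ENNReal.ofReal (s ^ (p + 1) / (p + 1)) := by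
  have hint : IntegrableOn (fun x : ℝ => x ^ p) (Ioc 0 s) := by
    have := (intervalIntegral.intervalIntegrable_rpow (μ := volume) (a := 0) (b := s) (Or.inl hp))
    rwa [intervalIntegrable_iff_integrableOn_Ioc_of_le hs.le] at this
  have hval : ∫ x in Ioc 0 s, x ^ p = s ^ (p + 1) / (p + 1) := by
    rw [← intervalIntegral.integral_of_le hs.le, integral_rpow (Or.inl (by linarith))]
    rw [Real.zero_rpow (by positivity)]
    ring
  rw [← hval]
  refine (ofReal_integral_eq_lintegral_ofReal hint ?_).symm
  filter_upwards [ae_restrict_mem measurableSet_Ioc] with x hx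
  exact Real.rpow_nonneg hx.1.le _

lemma pow_sq_mul {x : ℝ} (hx : 0 < x) (a : ℤ) :
    (x ^ a) ^ 2 * x = x ^ (2 * (a : ℝ) + 1) := by
  have h1 : (x ^ a : ℝ) = x ^ ((a : ℝ)) := (Real.rpow_intCast x a).symm
  calc (x ^ a) ^ 2 * x = (x ^ ((a : ℝ))) ^ (2 : ℕ) * x ^ (1 : ℝ) := by
        rw [h1, Real.rpow_one]
    _ = x ^ ((a : ℝ) * 2) * x ^ (1 : ℝ) := by
        rw [← Real.rpow_natCast (x ^ ((a : ℝ))) 2, ← Real.rpow_mul hx.le]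
        norm_num
    _ = x ^ ((a : ℝ) * 2 + 1) := (Real.rpow_add hx _ _).symm
    _ = x ^ (2 * (a : ℝ) + 1) := by rw [mul_comm ((a : ℝ)) 2]

/-- Hilbert–Schmidt bound for the angular-mode `ml` kernel. -/
theorem stmt_4 (α C : ℝ) (hα : α ∈ Ioo (0:ℝ) 1) (hC : 0 ≤ C) :
    ∃ C' > (0:ℝ), ∀ (m l : ℤ), 2 ≤ m → l ≠ 0 →
      ∀ (G' : ℝ → ℝ) (Q : ℝ → ℝ → ℂ),
      (∀ s ≥ (0:ℝ), |G' s| ≤ C * (1 + s) ^ (-1 - α)) →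
      (∀ s τ : ℝ, Q s τ =
        if s ≤ τ then
          (Complex.I / 2) * (l.sign : ℂ) *
            ((s ^ (|m * l| - 1 : ℤ) * τ ^ (-|m * l| : ℤ) * G' s : ℝ) : ℂ)
        else
          (Complex.I / 2) * (l.sign : ℂ) *
            ((s ^ (-|m * l| - 1 : ℤ) * τ ^ (|m * l| : ℤ) * G' s : ℝ) : ℂ)) →
      ∫⁻ s in Ioi (0:ℝ), ∫⁻ τ in Ioi (0:ℝ),
          ENNReal.ofReal (‖Q s τ‖^2 * s * τ) ≤ ENNReal.ofReal (C' / |(m * l : ℤ)|) := by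
  obtain ⟨hα0, hα1⟩ := hα
  have hden : (0:ℝ) < 1 + 1/(2*α) := by positivity
  refine ⟨(C^2 + 1) * (1 + 1/(2*α)) / 2, by positivity, ?_⟩
  intro m l hm hl G' Q hG hQ
  have hk2 : (2:ℤ) ≤ |m * l| := by
    have h1 : (1:ℤ) ≤ |l| := Int.one_le_abs hl
    have h2 : (2:ℤ) ≤ |m| := le_trans hm (le_abs_self m)
    calc (2:ℤ) = 2 * 1 := by ring
      _ ≤ |m| * |l| := mul_le_mul h2 h1 one_pos.le (by positivity)
      _ = |m * l| := (abs_mul m l).symm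
  set N : ℝ := ((|m * l| : ℤ) : ℝ) with hNdef
  have hN2 : (2:ℝ) ≤ N := by rw [hNdef]; exact_mod_cast hk2
  have hNpos : (0:ℝ) < N := by linarith
  have hNeq : |((m * l : ℤ) : ℝ)| = N := by rw [hNdef]; try (push_cast; ring)
  -- squared bound on G'
  have hG2 : ∀ s : ℝ, 0 < s → (G' s)^2 ≤ C^2 * (1+s) ^ (-2-2*α) := by
    intro s hs
    have h1 := hG s hs.le
    have h2 : (G' s)^2 ≤ (C * (1+s) ^ (-1-α))^2 := by
      rw [← sq_abs]
      exact pow_le_pow_left₀ (abs_nonneg _) h1 2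
    refine h2.trans_eq ?_
    rw [mul_pow]
    congr 1
    rw [← Real.rpow_natCast ((1+s) ^ (-1-α)) 2, ← Real.rpow_mul (by positivity)]
    rw [show (-1-α) * ((2:ℕ):ℝ) = -2-2*α by push_cast; ring]
  -- pointwise identity for the integrand
  have hnormQ : ∀ s τ : ℝ, 0 < s → 0 < τ → ‖Q s τ‖^2 * s * τ =
      (G' s)^2 * ((1/4) *
        (if s ≤ τ then s ^ (2*N-1) * τ ^ (1-2*N) else s ^ (-(2*N)-1) * τ ^ (2*N+1))) := by
    intro s τ hs hτ
    have hsgn : ‖((l.sign : ℂ))‖ = 1 := by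
      rw [Complex.norm_intCast]
      rcases lt_trichotomy l 0 with h|h|h
      · rw [Int.sign_eq_neg_one_of_neg h]; norm_num
      · exact absurd h hl
      · rw [Int.sign_eq_one_of_pos h]; norm_num
    rw [hQ s τ]
    split_ifs with hle
    · have hr : ‖(Complex.I / 2) * (l.sign : ℂ) *
          ((s ^ (|m*l| - 1 : ℤ) * τ ^ (-|m*l| : ℤ) * G' s : ℝ) : ℂ)‖
          = (1/2) * |s ^ (|m*l| - 1 : ℤ) * τ ^ (-|m*l| : ℤ) * G' s| := by
        rw [norm_mul, norm_mul, hsgn, Complex.norm_real, Real.norm_eq_abs, norm_div,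
          Complex.norm_I]
        norm_num
      rw [hr]
      have e1 := pow_sq_mul hs (|m*l| - 1)
      have e2 := pow_sq_mul hτ (-|m*l|)
      have c1 : (2 * ((|m*l| - 1 : ℤ) : ℝ) + 1) = 2*N - 1 := by
        rw [hNdef]; try (push_cast; ring)
      have c2 : (2 * ((-|m*l| : ℤ) : ℝ) + 1) = 1 - 2*N := by
        rw [hNdef]; try (push_cast; ring)
      calc ((1/2:ℝ) * |s ^ (|m*l| - 1 : ℤ) * τ ^ (-|m*l| : ℤ) * G' s|)^2 * s * τ
          = (G' s)^2 * ((1/4) * (((s ^ (|m*l| - 1 : ℤ))^2 * s) * ((τ ^ (-|m*l| : ℤ))^2 * τ))) := by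
            rw [mul_pow, sq_abs]; ring
        _ = (G' s)^2 * ((1/4) * (s ^ (2*N-1) * τ ^ (1-2*N))) := by rw [e1, e2, c1, c2]
    · have hr : ‖(Complex.I / 2) * (l.sign : ℂ) *
          ((s ^ (-|m*l| - 1 : ℤ) * τ ^ (|m*l| : ℤ) * G' s : ℝ) : ℂ)‖
          = (1/2) * |s ^ (-|m*l| - 1 : ℤ) * τ ^ (|m*l| : ℤ) * G' s| := by
        rw [norm_mul, norm_mul, hsgn, Complex.norm_real, Real.norm_eq_abs, norm_div,
          Complex.norm_I]
        norm_num
      rw [hr]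
      have e1 := pow_sq_mul hs (-|m*l| - 1)
      have e2 := pow_sq_mul hτ (|m*l|)
      have c1 : (2 * ((-|m*l| - 1 : ℤ) : ℝ) + 1) = -(2*N) - 1 := by
        rw [hNdef]; try (push_cast; ring)
      have c2 : (2 * ((|m*l| : ℤ) : ℝ) + 1) = 2*N + 1 := by
        rw [hNdef]; try (push_cast; ring)
      calc ((1/2:ℝ) * |s ^ (-|m*l| - 1 : ℤ) * τ ^ (|m*l| : ℤ) * G' s|)^2 * s * τ
          = (G' s)^2 * ((1/4) * (((s ^ (-|m*l| - 1 : ℤ))^2 * s) * ((τ ^ (|m*l| : ℤ))^2 * τ))) := by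
            rw [mul_pow, sq_abs]; ring
        _ = (G' s)^2 * ((1/4) * (s ^ (-(2*N)-1) * τ ^ (2*N+1))) := by rw [e1, e2, c1, c2]
  -- inner integral bound
  have inner_bound : ∀ s ∈ Ioi (0:ℝ),
      ∫⁻ τ in Ioi (0:ℝ), ENNReal.ofReal (‖Q s τ‖^2 * s * τ)
        ≤ ENNReal.ofReal ((C^2/(2*N)) * (1+s) ^ (-1-2*α)) := by
    intro s hs
    rw [mem_Ioi] at hs
    have h1s : (0:ℝ) < 1 + s := by linarith
    have hA : (0:ℝ) ≤ C^2 * (1+s) ^ (-2-2*α) / 4 := by positivity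
    have step1 : ∫⁻ τ in Ioi (0:ℝ), ENNReal.ofReal (‖Q s τ‖^2 * s * τ)
        ≤ ∫⁻ τ in Ioi (0:ℝ), ENNReal.ofReal ((C^2 * (1+s) ^ (-2-2*α) / 4) *
            (if s ≤ τ then s ^ (2*N-1) * τ ^ (1-2*N) else s ^ (-(2*N)-1) * τ ^ (2*N+1))) := by
      refine setLIntegral_mono' measurableSet_Ioi ?_
      intro τ hτ
      rw [mem_Ioi] at hτ
      refine ENNReal.ofReal_le_ofReal ?_
      rw [hnormQ s τ hs hτ]
      have hif : (0:ℝ) ≤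
          (if s ≤ τ then s ^ (2*N-1) * τ ^ (1-2*N) else s ^ (-(2*N)-1) * τ ^ (2*N+1)) := by
        split_ifs <;> positivity
      calc (G' s)^2 * ((1/4) *
            (if s ≤ τ then s ^ (2*N-1) * τ ^ (1-2*N) else s ^ (-(2*N)-1) * τ ^ (2*N+1)))
          ≤ (C^2 * (1+s) ^ (-2-2*α)) * ((1/4) *
            (if s ≤ τ then s ^ (2*N-1) * τ ^ (1-2*N) else s ^ (-(2*N)-1) * τ ^ (2*N+1))) :=
            mul_le_mul_of_nonneg_right (hG2 s hs) (by positivity)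
        _ = (C^2 * (1+s) ^ (-2-2*α) / 4) *
            (if s ≤ τ then s ^ (2*N-1) * τ ^ (1-2*N) else s ^ (-(2*N)-1) * τ ^ (2*N+1)) := by
            ring
    refine step1.trans ?_
    have step2 : ∫⁻ τ in Ioi (0:ℝ), ENNReal.ofReal ((C^2 * (1+s) ^ (-2-2*α) / 4) *
            (if s ≤ τ then s ^ (2*N-1) * τ ^ (1-2*N) else s ^ (-(2*N)-1) * τ ^ (2*N+1)))
        = ENNReal.ofReal (C^2 * (1+s) ^ (-2-2*α) / 4) *
            ∫⁻ τ in Ioi (0:ℝ), ENNReal.ofReal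
              (if s ≤ τ then s ^ (2*N-1) * τ ^ (1-2*N) else s ^ (-(2*N)-1) * τ ^ (2*N+1)) := by
      rw [← lintegral_const_mul' _ _ ENNReal.ofReal_ne_top]
      exact lintegral_congr fun τ => ENNReal.ofReal_mul hA
    rw [step2]
    have hsplit : Ioc (0:ℝ) s ∪ Ioi s = Ioi 0 := Ioc_union_Ioi_eq_Ioi hs.le
    have hIoc : ∫⁻ τ in Ioc (0:ℝ) s, ENNReal.ofReal
        (if s ≤ τ then s ^ (2*N-1) * τ ^ (1-2*N) else s ^ (-(2*N)-1) * τ ^ (2*N+1))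
        = ENNReal.ofReal (s/(2*N+2)) := by
      have hcongr : ∀ τ ∈ Ioc (0:ℝ) s,
          ENNReal.ofReal (if s ≤ τ then s ^ (2*N-1) * τ ^ (1-2*N)
            else s ^ (-(2*N)-1) * τ ^ (2*N+1))
          = ENNReal.ofReal (s ^ (-(2*N)-1) * τ ^ (2*N+1)) := by
        intro τ hτ
        congr 1
        split_ifs with h
        · have hts : τ = s := le_antisymm hτ.2 h
          subst hts
          rw [← Real.rpow_add hτ.1, ← Real.rpow_add hτ.1]
          norm_num
        · rfl
      rw [setLIntegral_congr_fun measurableSet_Ioc hcongr]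
      have hmul : ∀ τ : ℝ, ENNReal.ofReal (s ^ (-(2*N)-1) * τ ^ (2*N+1))
          = ENNReal.ofReal (s ^ (-(2*N)-1)) * ENNReal.ofReal (τ ^ (2*N+1)) := fun τ =>
        ENNReal.ofReal_mul (by positivity)
      simp_rw [hmul]
      rw [lintegral_const_mul' _ _ ENNReal.ofReal_ne_top, lintB hs (by linarith)]
      rw [← ENNReal.ofReal_mul (by positivity)]
      congr 1
      have hpow : s ^ (-(2*N)-1) * s ^ (2*N+2) = s := by
        rw [← Real.rpow_add hs, show (-(2*N)-1+(2*N+2) : ℝ) = 1 by ring, Real.rpow_one]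
      calc s ^ (-(2*N)-1) * (s ^ (2*N+1+1) / (2*N+1+1))
          = (s ^ (-(2*N)-1) * s ^ (2*N+2)) * (1/(2*N+2)) := by
            rw [show (2*N+1+1 : ℝ) = 2*N+2 by ring]; ring
        _ = s/(2*N+2) := by rw [hpow]; ring
    have hIoi : ∫⁻ τ in Ioi s, ENNReal.ofReal
        (if s ≤ τ then s ^ (2*N-1) * τ ^ (1-2*N) else s ^ (-(2*N)-1) * τ ^ (2*N+1))
        = ENNReal.ofReal (s/(2*N-2)) := by
      have hcongr : ∀ τ ∈ Ioi s,
          ENNReal.ofReal (if s ≤ τ then s ^ (2*N-1) * τ ^ (1-2*N)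
            else s ^ (-(2*N)-1) * τ ^ (2*N+1))
          = ENNReal.ofReal (s ^ (2*N-1) * τ ^ (1-2*N)) := by
        intro τ hτ
        rw [if_pos (le_of_lt hτ)]
      rw [setLIntegral_congr_fun measurableSet_Ioi hcongr]
      have hmul : ∀ τ : ℝ, ENNReal.ofReal (s ^ (2*N-1) * τ ^ (1-2*N))
          = ENNReal.ofReal (s ^ (2*N-1)) * ENNReal.ofReal (τ ^ (1-2*N)) := fun τ =>
        ENNReal.ofReal_mul (by positivity)
      simp_rw [hmul]
      rw [lintegral_const_mul' _ _ ENNReal.ofReal_ne_top, lintA hs (by linarith)]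
      rw [← ENNReal.ofReal_mul (by positivity)]
      congr 1
      have hpow : s ^ (2*N-1) * s ^ (2-2*N) = s := by
        rw [← Real.rpow_add hs, show (2*N-1+(2-2*N) : ℝ) = 1 by ring, Real.rpow_one]
      have h2 : (2 - 2*N : ℝ) ≠ 0 := by intro h; nlinarith
      have h3 : (2*N - 2 : ℝ) ≠ 0 := by intro h; nlinarith
      have hneg : -(1/(2-2*N) : ℝ) = 1/(2*N-2) := by
        field_simp
        try ring
        rw [neg_inv]; congr 1; ring
      calc s ^ (2*N-1) * (-s ^ (1-2*N+1) / (1-2*N+1))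
          = (s ^ (2*N-1) * s ^ (2-2*N)) * (-(1/(2-2*N))) := by
            rw [show (1-2*N+1 : ℝ) = 2-2*N by ring]; ring
        _ = s * (1/(2*N-2)) := by rw [hpow, hneg]
        _ = s/(2*N-2) := by ring
    calc ENNReal.ofReal (C^2 * (1+s) ^ (-2-2*α) / 4) *
          ∫⁻ τ in Ioi (0:ℝ), ENNReal.ofReal
            (if s ≤ τ then s ^ (2*N-1) * τ ^ (1-2*N) else s ^ (-(2*N)-1) * τ ^ (2*N+1))
        = ENNReal.ofReal (C^2 * (1+s) ^ (-2-2*α) / 4) *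
            (ENNReal.ofReal (s/(2*N+2)) + ENNReal.ofReal (s/(2*N-2))) := by
          rw [← hsplit, lintegral_union measurableSet_Ioi Ioc_disjoint_Ioi_same, hIoc, hIoi]
      _ ≤ ENNReal.ofReal (C^2 * (1+s) ^ (-2-2*α) / 4) * ENNReal.ofReal (2*s/N) := by
          refine mul_le_mul_right ?_ _
          rw [← ENNReal.ofReal_add (div_nonneg hs.le (by linarith)) (div_nonneg hs.le (by linarith))]
          apply ENNReal.ofReal_le_ofReal
          have h1 : s/(2*N+2) ≤ s/N := by
            rw [div_le_div_iff₀ (by linarith) hNpos]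
            nlinarith
          have h2 : s/(2*N-2) ≤ s/N := by
            rw [div_le_div_iff₀ (by linarith) hNpos]
            nlinarith
          have h3 : 2*s/N = s/N + s/N := by ring
          linarith
      _ = ENNReal.ofReal ((C^2 * (1+s) ^ (-2-2*α) / 4) * (2*s/N)) :=
          (ENNReal.ofReal_mul hA).symm
      _ ≤ ENNReal.ofReal ((C^2/(2*N)) * (1+s) ^ (-1-2*α)) := by
          apply ENNReal.ofReal_le_ofReal
          have hrw : (1+s) ^ (-1-2*α) = (1+s) * (1+s) ^ (-2-2*α) := by
            rw [show (-1-2*α:ℝ) = 1 + (-2-2*α) by ring, Real.rpow_add h1s, Real.rpow_one]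
          have hfac : s * (1+s) ^ (-2-2*α) ≤ (1+s) ^ (-1-2*α) := by
            rw [hrw]
            exact mul_le_mul_of_nonneg_right (by linarith) (Real.rpow_nonneg h1s.le _)
          calc (C^2 * (1+s) ^ (-2-2*α) / 4) * (2*s/N)
              = (C^2/(2*N)) * (s * (1+s) ^ (-2-2*α)) := by ring
            _ ≤ (C^2/(2*N)) * (1+s) ^ (-1-2*α) :=
                mul_le_mul_of_nonneg_left hfac (by positivity)
  -- outer integral
  have houter : ∫⁻ s in Ioi (0:ℝ), ∫⁻ τ in Ioi (0:ℝ), ENNReal.ofReal (‖Q s τ‖^2 * s * τ)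
      ≤ ∫⁻ s in Ioi (0:ℝ), ENNReal.ofReal ((C^2/(2*N)) * (1+s) ^ (-1-2*α)) :=
    setLIntegral_mono' measurableSet_Ioi inner_bound
  refine houter.trans ?_
  have hc2N : (0:ℝ) ≤ C^2/(2*N) := by positivity
  have hpull : ∫⁻ s in Ioi (0:ℝ), ENNReal.ofReal ((C^2/(2*N)) * (1+s) ^ (-1-2*α))
      = ENNReal.ofReal (C^2/(2*N)) * ∫⁻ s in Ioi (0:ℝ), ENNReal.ofReal ((1+s) ^ (-1-2*α)) := by
    rw [← lintegral_const_mul' _ _ ENNReal.ofReal_ne_top]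
    exact lintegral_congr fun s => ENNReal.ofReal_mul hc2N
  rw [hpull]
  have hJ1 : ∫⁻ s in Ioc (0:ℝ) 1, ENNReal.ofReal ((1+s) ^ (-1-2*α)) ≤ ENNReal.ofReal 1 := by
    have hb : ∀ s ∈ Ioc (0:ℝ) 1, ENNReal.ofReal ((1+s) ^ (-1-2*α)) ≤ ENNReal.ofReal 1 := by
      intro s hs
      exact ENNReal.ofReal_le_ofReal
        (Real.rpow_le_one_of_one_le_of_nonpos (by linarith [hs.1]) (by linarith))
    calc ∫⁻ s in Ioc (0:ℝ) 1, ENNReal.ofReal ((1+s) ^ (-1-2*α))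
        ≤ ∫⁻ _ in Ioc (0:ℝ) 1, ENNReal.ofReal 1 := setLIntegral_mono' measurableSet_Ioc hb
      _ = ENNReal.ofReal 1 * volume (Ioc (0:ℝ) 1) := setLIntegral_const _ _
      _ = ENNReal.ofReal 1 := by simp [Real.volume_Ioc]
  have hJ2 : ∫⁻ s in Ioi (1:ℝ), ENNReal.ofReal ((1+s) ^ (-1-2*α))
      ≤ ENNReal.ofReal (1/(2*α)) := by
    have hb : ∀ s ∈ Ioi (1:ℝ), ENNReal.ofReal ((1+s) ^ (-1-2*α))
        ≤ ENNReal.ofReal (s ^ (-1-2*α)) := by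
      intro s hs
      rw [mem_Ioi] at hs
      exact ENNReal.ofReal_le_ofReal
        (Real.rpow_le_rpow_of_nonpos (by linarith) (by linarith) (by linarith))
    calc ∫⁻ s in Ioi (1:ℝ), ENNReal.ofReal ((1+s) ^ (-1-2*α))
        ≤ ∫⁻ s in Ioi (1:ℝ), ENNReal.ofReal (s ^ (-1-2*α)) :=
          setLIntegral_mono' measurableSet_Ioi hb
      _ = ENNReal.ofReal (-(1:ℝ) ^ ((-1-2*α)+1) / ((-1-2*α)+1)) := lintA one_pos (by linarith)
      _ = ENNReal.ofReal (1/(2*α)) := by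
          rw [Real.one_rpow]
          congr 1
          rw [show ((-1-2*α)+1 : ℝ) = -(2*α) by ring, div_neg, neg_div, neg_neg]
  have hJ : ∫⁻ s in Ioi (0:ℝ), ENNReal.ofReal ((1+s) ^ (-1-2*α))
      ≤ ENNReal.ofReal (1 + 1/(2*α)) := by
    have hsplit1 : Ioc (0:ℝ) 1 ∪ Ioi 1 = Ioi 0 := Ioc_union_Ioi_eq_Ioi zero_le_one
    rw [← hsplit1, lintegral_union measurableSet_Ioi Ioc_disjoint_Ioi_same]
    calc _ ≤ ENNReal.ofReal 1 + ENNReal.ofReal (1/(2*α)) := add_le_add hJ1 hJ2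
      _ = ENNReal.ofReal (1 + 1/(2*α)) :=
        (ENNReal.ofReal_add zero_le_one (div_nonneg zero_le_one (by linarith))).symm
  calc ENNReal.ofReal (C^2/(2*N)) * ∫⁻ s in Ioi (0:ℝ), ENNReal.ofReal ((1+s) ^ (-1-2*α))
      ≤ ENNReal.ofReal (C^2/(2*N)) * ENNReal.ofReal (1 + 1/(2*α)) := mul_le_mul_right hJ _
    _ = ENNReal.ofReal ((C^2/(2*N)) * (1 + 1/(2*α))) := (ENNReal.ofReal_mul hc2N).symm
    _ ≤ ENNReal.ofReal ((C^2 + 1) * (1 + 1/(2*α)) / 2 / N) := by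
        apply ENNReal.ofReal_le_ofReal
        rw [div_div, div_mul_eq_mul_div]
        rw [div_le_div_iff₀ (by linarith) (by linarith)]
        nlinarith [mul_nonneg hden.le hNpos.le]
end

section
/- Let γ > 0, α > 0 and suppose |Ω'(s)| s ≤ C s² (1+s)^{-2-α} for all s ≥ 0. Let x : [0,∞) → ℝ² satisfy |y| e^{-γξ - 1} ≤ |x(ξ)| ≤ |y| e^{-γξ + 1} for all ξ ≥ 0. Then ∫₀^∞ |x(ξ)|² (1 + |x(ξ)|)^{-2-α} dξ ≤ (C'/γ) ∫₀^∞ r(1+r)^{-2-α} dr < ∞, with C' independent of y. -/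
open MeasureTheory Set

local notation "E2" => EuclideanSpace ℝ (Fin 2)

lemma aux_integrable {α : ℝ} (hα : 0 < α) :
    IntegrableOn (fun r => r * (1 + r) ^ (-2 - α)) (Ioi (0:ℝ)) := by
  rw [← Ioc_union_Ioi_eq_Ioi (zero_le_one : (0:ℝ) ≤ 1)]
  apply IntegrableOn.union
  · have hc : ContinuousOn (fun r : ℝ => r * (1 + r) ^ (-2 - α)) (Icc (0:ℝ) 1) := by
      apply continuousOn_id.mul
      apply ContinuousOn.rpow_const (by fun_prop)
      intro r hr
      left
      have := hr.1
      intro h; nlinarith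
    exact hc.integrableOn_Icc.mono_set Ioc_subset_Icc_self
  · have hint : IntegrableOn (fun r : ℝ => r ^ (-1 - α)) (Ioi (1:ℝ)) :=
      integrableOn_Ioi_rpow_of_lt (by linarith) one_pos
    apply Integrable.mono hint
    · apply Measurable.aestronglyMeasurable
      fun_prop
    · filter_upwards [ae_restrict_mem measurableSet_Ioi] with r hr
      have hr1 : (1:ℝ) < r := hr
      have h1r : (0:ℝ) < 1 + r := by linarith
      have hnn : 0 ≤ r * (1 + r) ^ (-2 - α) := by positivity
      rw [Real.norm_of_nonneg hnn, Real.norm_of_nonneg (Real.rpow_nonneg (by linarith) _)]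
      calc r * (1 + r) ^ (-2 - α) ≤ (1 + r) * (1 + r) ^ (-2 - α) := by
            apply mul_le_mul_of_nonneg_right (by linarith) (Real.rpow_nonneg h1r.le _)
        _ = (1 + r) ^ (-1 - α) := by
            rw [show (-1 - α) = 1 + (-2 - α) by ring, Real.rpow_add h1r, Real.rpow_one]
        _ ≤ r ^ (-1 - α) :=
            Real.rpow_le_rpow_of_nonpos (by linarith) (by linarith) (by linarith)

lemma lintA_s11 {c A b : ℝ} (hc : 0 < c) (hA : 0 ≤ A) :
    ∫⁻ ξ in Ioi b, ENNReal.ofReal (A * Real.exp (-c * ξ)) =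
      ENNReal.ofReal (A * Real.exp (-(c * b)) / c) := by
  have hint : IntegrableOn (fun ξ : ℝ => A * Real.exp (-c * ξ)) (Ioi b) :=
    (exp_neg_integrableOn_Ioi b hc).const_mul A
  rw [← ofReal_integral_eq_lintegral_ofReal hint
      (ae_of_all _ fun ξ => mul_nonneg hA (Real.exp_pos _).le)]
  congr 1
  rw [MeasureTheory.integral_const_mul]
  have h := integral_comp_mul_left_Ioi (fun u => Real.exp (-u)) b hc
  simp only [smul_eq_mul, integral_exp_neg_Ioi] at h
  simp only [neg_mul]
  rw [h]; ring

lemma lintB_s11 {c A b : ℝ} (hc : 0 < c) (hA : 0 ≤ A) (hb : 0 ≤ b) :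
    ∫⁻ ξ in Ioc 0 b, ENNReal.ofReal (A * Real.exp (c * ξ)) =
      ENNReal.ofReal (A * (Real.exp (c * b) - 1) / c) := by
  have hcont : Continuous fun ξ : ℝ => A * Real.exp (c * ξ) := by fun_prop
  have hint : IntegrableOn (fun ξ : ℝ => A * Real.exp (c * ξ)) (Ioc 0 b) :=
    hcont.integrableOn_Ioc
  rw [← ofReal_integral_eq_lintegral_ofReal hint
      (ae_of_all _ fun ξ => mul_nonneg hA (Real.exp_pos _).le)]
  congr 1
  rw [← intervalIntegral.integral_of_le hb, intervalIntegral.integral_const_mul,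
    intervalIntegral.integral_comp_mul_left (fun u => Real.exp u) hc.ne']
  simp only [mul_zero, integral_exp, Real.exp_zero, smul_eq_mul]
  ring

/-- uniform integrability of the strain along exponentially contracting
trajectories. -/
theorem stmt_11 (γ α C : ℝ) (hγ : 0 < γ) (hα : 0 < α) (hC : 0 < C)
    (Ω' : ℝ → ℝ) (hΩ' : ∀ s ≥ (0:ℝ), |Ω' s| * s ≤ C * s^2 * (1 + s) ^ (-2 - α)) :
    ∃ C' > (0:ℝ), ∀ (y : E2) (x : ℝ → E2), Continuous x →
      (∀ ξ ≥ (0:ℝ), ‖y‖ * Real.exp (-γ * ξ - 1) ≤ ‖x ξ‖ ∧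
                     ‖x ξ‖ ≤ ‖y‖ * Real.exp (-γ * ξ + 1)) →
      (∫⁻ ξ in Ioi (0:ℝ), ENNReal.ofReal (‖x ξ‖^2 * (1 + ‖x ξ‖) ^ (-2 - α)) ≤
        ENNReal.ofReal ((C' / γ) * ∫ r in Ioi (0:ℝ), r * (1 + r) ^ (-2 - α))) ∧
      IntegrableOn (fun r => r * (1 + r) ^ (-2 - α)) (Ioi (0:ℝ)) := by
  have hInt := aux_integrable hα
  set I := ∫ r in Ioi (0:ℝ), r * (1 + r) ^ (-2 - α) with hIdef
  have hIpos : 0 < I := by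
    rw [hIdef, setIntegral_pos_iff_support_of_nonneg_ae ?_ hInt]
    · refine lt_of_lt_of_le ?_ (measure_mono (?_ :
        Ioi (0:ℝ) ⊆ Function.support (fun r => r * (1 + r) ^ (-2 - α)) ∩ Ioi 0))
      · simp [Real.volume_Ioi]
      · intro r hr
        have hr0 : (0:ℝ) < r := hr
        exact ⟨ne_of_gt (mul_pos hr0 (Real.rpow_pos_of_pos (by linarith) _)), hr⟩
    · filter_upwards [ae_restrict_mem measurableSet_Ioi] with r hr
      have hr0 : (0:ℝ) < r := hr
      positivity
  set K := Real.exp (2 * α) / α + 1 / 2 with hKdef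
  have hKpos : 0 < K := by positivity
  refine ⟨K / I, div_pos hKpos hIpos, ?_⟩
  intro y x hx hbd
  refine ⟨?_, hInt⟩
  have hRHS : K / I / γ * I = K / γ := by field_simp
  rw [hRHS]
  -- pointwise upper bound A
  have hA : ∀ ξ ∈ Ioi (0:ℝ), ‖x ξ‖^2 * (1 + ‖x ξ‖) ^ (-2 - α) ≤
      (‖y‖ * Real.exp 1)^2 * Real.exp (-(2 * γ) * ξ) := by
    intro ξ hξ
    obtain ⟨hlo, hhi⟩ := hbd ξ (le_of_lt hξ)
    have h1 : (1 + ‖x ξ‖) ^ (-2 - α) ≤ 1 :=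
      Real.rpow_le_one_of_one_le_of_nonpos (by linarith [norm_nonneg (x ξ)]) (by linarith)
    calc ‖x ξ‖^2 * (1 + ‖x ξ‖) ^ (-2 - α) ≤ ‖x ξ‖^2 * 1 := by
          apply mul_le_mul_of_nonneg_left h1 (by positivity)
      _ = ‖x ξ‖^2 := mul_one _
      _ ≤ (‖y‖ * Real.exp 1 * Real.exp (-γ * ξ))^2 := by
          apply pow_le_pow_left₀ (norm_nonneg _)
          calc ‖x ξ‖ ≤ ‖y‖ * Real.exp (-γ * ξ + 1) := hhi
            _ = ‖y‖ * Real.exp 1 * Real.exp (-γ * ξ) := by rw [mul_assoc, ← Real.exp_add]; ring_nf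
      _ = (‖y‖ * Real.exp 1)^2 * Real.exp (-(2 * γ) * ξ) := by
          rw [mul_pow, sq (Real.exp (-γ * ξ)), ← Real.exp_add]
          congr 1; ring
  by_cases hy : ‖y‖ = 0
  · -- trivial case: x ≡ 0 on the ray
    have h0 : ∀ ξ ∈ Ioi (0:ℝ),
        ENNReal.ofReal (‖x ξ‖^2 * (1 + ‖x ξ‖) ^ (-2 - α)) = 0 := by
      intro ξ hξ
      obtain ⟨-, hhi⟩ := hbd ξ (le_of_lt hξ)
      rw [hy, zero_mul] at hhi
      have : ‖x ξ‖ = 0 := le_antisymm hhi (norm_nonneg _)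
      simp [this]
    rw [setLIntegral_congr_fun measurableSet_Ioi h0]
    simp
  · have hy0 : 0 < ‖y‖ := lt_of_le_of_ne (norm_nonneg _) (Ne.symm hy)
    -- pointwise lower-bound-based estimate B
    have hB : ∀ ξ ∈ Ioi (0:ℝ), ‖x ξ‖^2 * (1 + ‖x ξ‖) ^ (-2 - α) ≤
        (‖y‖ ^ (-α) * Real.exp α) * Real.exp ((α * γ) * ξ) := by
      intro ξ hξ
      obtain ⟨hlo, hhi⟩ := hbd ξ (le_of_lt hξ)
      have hL : 0 < ‖y‖ * Real.exp (-γ * ξ - 1) := by positivity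
      have hs : 0 < ‖x ξ‖ := lt_of_lt_of_le hL hlo
      calc ‖x ξ‖^2 * (1 + ‖x ξ‖) ^ (-2 - α) ≤ ‖x ξ‖^2 * ‖x ξ‖ ^ (-2 - α) := by
            apply mul_le_mul_of_nonneg_left
              (Real.rpow_le_rpow_of_nonpos hs (by linarith) (by linarith)) (by positivity)
        _ = ‖x ξ‖ ^ (-α) := by
            rw [← Real.rpow_natCast (‖x ξ‖) 2, ← Real.rpow_add hs]
            congr 1; push_cast; ring
        _ ≤ (‖y‖ * Real.exp (-γ * ξ - 1)) ^ (-α) :=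
            Real.rpow_le_rpow_of_nonpos hL hlo (by linarith)
        _ = (‖y‖ ^ (-α) * Real.exp α) * Real.exp ((α * γ) * ξ) := by
            rw [Real.mul_rpow hy0.le (Real.exp_pos _).le, ← Real.exp_mul,
              show (-γ * ξ - 1) * (-α) = α + (α * γ) * ξ by ring, Real.exp_add, ← mul_assoc]
    by_cases hsmall : ‖y‖ * Real.exp 1 ≤ 1
    · -- small data: use bound A on all of Ioi 0
      calc ∫⁻ ξ in Ioi (0:ℝ), ENNReal.ofReal (‖x ξ‖^2 * (1 + ‖x ξ‖) ^ (-2 - α))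
          ≤ ∫⁻ ξ in Ioi (0:ℝ),
              ENNReal.ofReal ((‖y‖ * Real.exp 1)^2 * Real.exp (-(2 * γ) * ξ)) :=
            setLIntegral_mono' measurableSet_Ioi fun ξ hξ =>
              ENNReal.ofReal_le_ofReal (hA ξ hξ)
        _ = ENNReal.ofReal ((‖y‖ * Real.exp 1)^2 * Real.exp (-(2 * γ * 0)) / (2 * γ)) :=
            lintA_s11 (by positivity) (by positivity)
        _ ≤ ENNReal.ofReal (K / γ) := by
            apply ENNReal.ofReal_le_ofReal
            have h1 : (‖y‖ * Real.exp 1)^2 ≤ 1 := by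
              nlinarith [mul_nonneg hy0.le (Real.exp_pos 1).le]
            rw [mul_zero, neg_zero, Real.exp_zero, mul_one]
            rw [div_le_div_iff₀ (by positivity) hγ, hKdef]
            have hb : 0 < Real.exp (2 * α) / α := by positivity
            nlinarith [mul_le_mul_of_nonneg_right h1 hγ.le, mul_pos hγ hb]
    · push_neg at hsmall
      set b := Real.log (‖y‖ * Real.exp 1) / γ with hbdef
      have hlogpos : 0 < Real.log (‖y‖ * Real.exp 1) := Real.log_pos hsmall
      have hb0 : 0 ≤ b := le_of_lt (div_pos hlogpos hγ)
      have hgb : γ * b = Real.log (‖y‖ * Real.exp 1) := by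
        rw [hbdef]; field_simp
      have hebg : Real.exp (γ * b) = ‖y‖ * Real.exp 1 := by
        rw [hgb, Real.exp_log (by positivity)]
      rw [← Ioc_union_Ioi_eq_Ioi hb0, lintegral_union measurableSet_Ioi Ioc_disjoint_Ioi_same]
      have part1 : ∫⁻ ξ in Ioc (0:ℝ) b, ENNReal.ofReal (‖x ξ‖^2 * (1 + ‖x ξ‖) ^ (-2 - α)) ≤
          ENNReal.ofReal (Real.exp (2 * α) / (α * γ)) := by
        calc ∫⁻ ξ in Ioc (0:ℝ) b, ENNReal.ofReal (‖x ξ‖^2 * (1 + ‖x ξ‖) ^ (-2 - α))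
            ≤ ∫⁻ ξ in Ioc (0:ℝ) b,
                ENNReal.ofReal ((‖y‖ ^ (-α) * Real.exp α) * Real.exp ((α * γ) * ξ)) :=
              setLIntegral_mono' measurableSet_Ioc fun ξ hξ =>
                ENNReal.ofReal_le_ofReal (hB ξ hξ.1)
          _ = ENNReal.ofReal ((‖y‖ ^ (-α) * Real.exp α) *
                (Real.exp ((α * γ) * b) - 1) / (α * γ)) :=
              lintB_s11 (by positivity) (by positivity) hb0
          _ ≤ ENNReal.ofReal (Real.exp (2 * α) / (α * γ)) := by
              apply ENNReal.ofReal_le_ofReal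
              have hkey : (‖y‖ ^ (-α) * Real.exp α) * Real.exp ((α * γ) * b) =
                  Real.exp (2 * α) := by
                have h1 : Real.exp ((α * γ) * b) = ‖y‖ ^ α * Real.exp α := by
                  rw [show (α * γ) * b = (γ * b) * α by ring, Real.exp_mul, hebg,
                    Real.mul_rpow hy0.le (Real.exp_pos 1).le, Real.exp_one_rpow]
                rw [h1, show (‖y‖ ^ (-α) * Real.exp α) * (‖y‖ ^ α * Real.exp α) =
                  (‖y‖ ^ (-α) * ‖y‖ ^ α) * (Real.exp α * Real.exp α) by ring,
                  ← Real.rpow_add hy0, ← Real.exp_add]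
                norm_num
                congr 1; ring
              have hnum : (‖y‖ ^ (-α) * Real.exp α) * (Real.exp ((α * γ) * b) - 1) ≤
                  Real.exp (2 * α) := by
                rw [← hkey]
                apply mul_le_mul_of_nonneg_left (by linarith [Real.exp_pos ((α * γ) * b)])
                  (by positivity)
              gcongr
      have part2 : ∫⁻ ξ in Ioi b, ENNReal.ofReal (‖x ξ‖^2 * (1 + ‖x ξ‖) ^ (-2 - α)) ≤
          ENNReal.ofReal (1 / (2 * γ)) := by
        calc ∫⁻ ξ in Ioi b, ENNReal.ofReal (‖x ξ‖^2 * (1 + ‖x ξ‖) ^ (-2 - α))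
            ≤ ∫⁻ ξ in Ioi b,
                ENNReal.ofReal ((‖y‖ * Real.exp 1)^2 * Real.exp (-(2 * γ) * ξ)) :=
              setLIntegral_mono' measurableSet_Ioi fun ξ hξ =>
                ENNReal.ofReal_le_ofReal (hA ξ (lt_of_le_of_lt hb0 hξ))
          _ = ENNReal.ofReal ((‖y‖ * Real.exp 1)^2 * Real.exp (-(2 * γ * b)) / (2 * γ)) :=
              lintA_s11 (by positivity) (by positivity)
          _ ≤ ENNReal.ofReal (1 / (2 * γ)) := by
              apply ENNReal.ofReal_le_ofReal
              have h1 : Real.exp (-(2 * γ * b)) = (Real.exp (-(γ * b)))^2 := by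
                rw [sq, ← Real.exp_add]; congr 1; ring
              have h2 : Real.exp (-(γ * b)) = (‖y‖ * Real.exp 1)⁻¹ := by
                rw [Real.exp_neg, hebg]
              have h3 : (‖y‖ * Real.exp 1)^2 * Real.exp (-(2 * γ * b)) = 1 := by
                rw [h1, h2, ← mul_pow, mul_inv_cancel₀ (by positivity)]
                norm_num
              rw [h3]
      calc (∫⁻ ξ in Ioc (0:ℝ) b, ENNReal.ofReal (‖x ξ‖^2 * (1 + ‖x ξ‖) ^ (-2 - α))) +
            ∫⁻ ξ in Ioi b, ENNReal.ofReal (‖x ξ‖^2 * (1 + ‖x ξ‖) ^ (-2 - α))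
          ≤ ENNReal.ofReal (Real.exp (2 * α) / (α * γ)) + ENNReal.ofReal (1 / (2 * γ)) :=
            add_le_add part1 part2
        _ = ENNReal.ofReal (Real.exp (2 * α) / (α * γ) + 1 / (2 * γ)) :=
            (ENNReal.ofReal_add (by positivity) (by positivity)).symm
        _ ≤ ENNReal.ofReal (K / γ) := by
            apply ENNReal.ofReal_le_ofReal
            apply le_of_eq
            rw [hKdef]
            field_simp
end
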